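/- Let F be a PCAF, C a set of claims, and i ∈ {2,3,4}. Then C ∈ stb_p^i(F) if and only if claim(E_*^i(C)) = C and E_*^i(C) is a stable extension of Red_i(F). In particular, if claim(E_*^i(C)) = C but E_*^i(C) is not stable in Red_i(F), then no stable extension S of Red_i(F) satisfies claim(S) = C. -/

import Mathlib

/-- A claim-augmented argumentation framework (CAF): a finite set of arguments,
an attack relation between the arguments, and a claim function assigning
a claim to each argument.  Arguments and claims are drawn from `ℕ`. -/
structure CAF where
  args : Finset ℕ
  att : Set (ℕ × ℕ)
  claim : ℕ → ℕ
  att_dom : ∀ p ∈ att, p.1 ∈ args ∧ p.2 ∈ args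

namespace CAF

/-- A CAF is well-formed if arguments with the same claim attack the same arguments. -/
def wf (F : CAF) : Prop :=
  ∀ a ∈ F.args, ∀ b ∈ F.args, F.claim a = F.claim b →
    ∀ c, ((a, c) ∈ F.att ↔ (b, c) ∈ F.att)

/-- `S` attacks the argument `b` in `F`. -/
def attacks (F : CAF) (S : Set ℕ) (b : ℕ) : Prop := ∃ a ∈ S, (a, b) ∈ F.att

/-- The argument `a` is defended by `S` in `F`. -/
def defends (F : CAF) (S : Set ℕ) (a : ℕ) : Prop :=
  ∀ b, (b, a) ∈ F.att → F.attacks S b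

/-- The range `S⊕` of `S` in `F`. -/
def range (F : CAF) (S : Set ℕ) : Set ℕ := S ∪ {b | F.attacks S b}

/-- Conflict-free sets. -/
def cf (F : CAF) (S : Set ℕ) : Prop :=
  S ⊆ ↑F.args ∧ ∀ a ∈ S, ∀ b ∈ S, (a, b) ∉ F.att

/-- Admissible sets. -/
def adm (F : CAF) (S : Set ℕ) : Prop :=
  F.cf S ∧ ∀ a ∈ S, F.defends S a

/-- Complete extensions. -/
def com (F : CAF) (S : Set ℕ) : Prop :=
  F.adm S ∧ ∀ a ∈ F.args, F.defends S a → a ∈ S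

/-- Naive extensions: ⊆-maximal conflict-free sets. -/
def naive (F : CAF) (S : Set ℕ) : Prop :=
  F.cf S ∧ ¬ ∃ T, F.cf T ∧ S ⊂ T

/-- Stable extensions. -/
def stb (F : CAF) (S : Set ℕ) : Prop :=
  F.cf S ∧ ∀ a ∈ F.args, a ∉ S → F.attacks S a

/-- Preferred extensions: ⊆-maximal admissible sets. -/
def prf (F : CAF) (S : Set ℕ) : Prop :=
  F.adm S ∧ ¬ ∃ T, F.adm T ∧ S ⊂ T

/-- Semi-stable extensions: admissible sets with ⊆-maximal range among admissible sets. -/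
def sem (F : CAF) (S : Set ℕ) : Prop :=
  F.adm S ∧ ¬ ∃ T, F.adm T ∧ F.range S ⊂ F.range T

/-- Stage extensions: conflict-free sets with ⊆-maximal range among conflict-free sets. -/
def stg (F : CAF) (S : Set ℕ) : Prop :=
  F.cf S ∧ ¬ ∃ T, F.cf T ∧ F.range S ⊂ F.range T

/-- The claim-based variant `σ_c` of a semantics `σ`. -/
def claimSem (σ : CAF → Set ℕ → Prop) (F : CAF) : Set (Set ℕ) :=
  {C | ∃ S, σ F S ∧ F.claim '' S = C}

/-- The wf-problematic part of a CAF: the pairs of arguments `(a,b)` such that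
`(a,b)` is not an attack but some argument `a'` with the same claim as `a` attacks `b`. -/
def wfp (F : CAF) : Set (ℕ × ℕ) :=
  {p | p.1 ∈ F.args ∧ p.2 ∈ F.args ∧ p ∉ F.att ∧
       ∃ a' ∈ F.args, F.claim a' = F.claim p.1 ∧ (a', p.2) ∈ F.att}

end CAF

/-- A preference-based CAF (PCAF): a well-formed CAF together with an
asymmetric preference relation over its arguments. -/
structure PCAF extends CAF where
  pref : ℕ → ℕ → Prop
  pref_dom : ∀ a b, pref a b → a ∈ args ∧ b ∈ args
  pref_asymm : ∀ a b, pref a b → ¬ pref b a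
  isWf : toCAF.wf

/-- The attack relation obtained from a PCAF by Reduction `i` (`i ∈ {1,2,3,4}`). -/
def redAtt (i : ℕ) (F : PCAF) : Set (ℕ × ℕ) :=
  if i = 1 then {p | p ∈ F.att ∧ ¬ F.pref p.2 p.1}
  else if i = 2 then
    {p | (p ∈ F.att ∧ ¬ F.pref p.2 p.1) ∨
         ((p.2, p.1) ∈ F.att ∧ p ∉ F.att ∧ F.pref p.1 p.2)}
  else if i = 3 then
    {p | (p ∈ F.att ∧ ¬ F.pref p.2 p.1) ∨ (p ∈ F.att ∧ (p.2, p.1) ∉ F.att)}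
  else if i = 4 then
    {p | (p ∈ F.att ∧ ¬ F.pref p.2 p.1) ∨
         ((p.2, p.1) ∈ F.att ∧ p ∉ F.att ∧ F.pref p.1 p.2) ∨
         (p ∈ F.att ∧ (p.2, p.1) ∉ F.att)}
  else ∅

/-- The CAF `Red_i(F)` obtained from the PCAF `F` by Reduction `i`. -/
def Red (i : ℕ) (F : PCAF) : CAF where
  args := F.args
  att := redAtt i F
  claim := F.claim
  att_dom := by
    intro p hp
    unfold redAtt at hp
    split_ifs at hp
    · simp only [Set.mem_setOf_eq] at hp
      exact F.att_dom p hp.1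
    · simp only [Set.mem_setOf_eq] at hp
      rcases hp with ⟨h, -⟩ | ⟨h, -, -⟩
      · exact F.att_dom p h
      · exact ⟨(F.att_dom _ h).2, (F.att_dom _ h).1⟩
    · simp only [Set.mem_setOf_eq] at hp
      rcases hp with ⟨h, -⟩ | ⟨h, -⟩ <;> exact F.att_dom p h
    · simp only [Set.mem_setOf_eq] at hp
      rcases hp with ⟨h, -⟩ | ⟨h, -, -⟩ | ⟨h, -⟩
      · exact F.att_dom p h
      · exact ⟨(F.att_dom _ h).2, (F.att_dom _ h).1⟩
      · exact F.att_dom p h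
    · exact absurd hp (Set.notMem_empty p)

/-- `Image_i`: the class of CAFs obtainable by applying Reduction `i` to a PCAF. -/
def ImageI (i : ℕ) : Set CAF := {F | ∃ G : PCAF, Red i G = F}

/-- `ImageTrans_i`: the class of CAFs obtainable by applying Reduction `i`
to a PCAF with a transitive preference relation. -/
def ImageTransI (i : ℕ) : Set CAF :=
  {F | ∃ G : PCAF, Transitive G.pref ∧ Red i G = F}

/-- The class of well-formed CAFs. -/
def wfCAFs : Set CAF := {F | F.wf}

/-- The preference-claim-based variant `σ_p^i` of a semantics `σ`. -/
def prefSem (σ : CAF → Set ℕ → Prop) (i : ℕ) (F : PCAF) : Set (Set ℕ) :=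
  CAF.claimSem σ (Red i F)

/-- `E_0(C)`: all arguments of `F` with a claim in `C`. -/
def E0 (F : PCAF) (C : Set ℕ) : Set ℕ := {a | a ∈ F.args ∧ F.claim a ∈ C}

/-- `E_1^i(C)`: the arguments of `E_0(C)` not attacked by `E_0(C)` in the
underlying AF of `F` (this set does not depend on `i`). -/
def E1 (F : PCAF) (C : Set ℕ) : Set ℕ :=
  E0 F C \ {b | ∃ a ∈ E0 F C, (a, b) ∈ F.att}

/-- The sequence `E_k^i(C)`. -/
def Ek (F : PCAF) (i : ℕ) (C : Set ℕ) : ℕ → Set ℕ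
  | 0 => E0 F C
  | 1 => E1 F C
  | (k + 2) => {x | x ∈ Ek F i C (k + 1) ∧ (Red i F).defends (Ek F i C (k + 1)) x}

/-- `E_*^i(C)`: the fixed point of the sequence `E_k^i(C)` (reached after at
most `|A|` steps, since the sequence is ⊆-decreasing from index 1 on). -/
def Estar (F : PCAF) (i : ℕ) (C : Set ℕ) : Set ℕ := Ek F i C (F.args.card + 2)

section Helpers

lemma red_att_sub (i : ℕ) (F : PCAF) :
    ∀ p ∈ redAtt i F, p ∈ F.att ∨ (p.2, p.1) ∈ F.att := by
  intro p hp
  unfold redAtt at hp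
  split_ifs at hp <;>
    simp only [Set.mem_setOf_eq, Set.mem_empty_iff_false] at hp <;> tauto

lemma att_to_red {i : ℕ} (hi : i = 2 ∨ i = 3 ∨ i = 4) (F : PCAF) {a b : ℕ}
    (hab : (a, b) ∈ F.att) : (a, b) ∈ redAtt i F ∨ (b, a) ∈ redAtt i F := by
  have hasym := F.pref_asymm a b
  have hasym' := F.pref_asymm b a
  rcases hi with rfl | rfl | rfl <;>
    · unfold redAtt
      norm_num [Set.mem_setOf_eq]
      by_cases h1 : F.pref b a <;> by_cases h2 : (b, a) ∈ F.att <;> tauto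

lemma cf_no_att {i : ℕ} (hi : i = 2 ∨ i = 3 ∨ i = 4) (F : PCAF) {S : Set ℕ}
    (hcf : (Red i F).cf S) {a b : ℕ} (ha : a ∈ S) (hb : b ∈ S) :
    (a, b) ∉ F.att := by
  intro h
  rcases att_to_red hi F h with h' | h'
  · exact hcf.2 a ha b hb h'
  · exact hcf.2 b hb a ha h'

lemma Ek_sub_E1 (F : PCAF) (i : ℕ) (C : Set ℕ) :
    ∀ k, Ek F i C (k + 1) ⊆ E1 F C := by
  intro k
  induction k with
  | zero => exact fun x hx => hx
  | succ n ih => exact fun x hx => ih hx.1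

lemma E1_cf {i : ℕ} (hi : i = 2 ∨ i = 3 ∨ i = 4) (F : PCAF) {T : Set ℕ}
    (hT : T ⊆ E1 F C) : (Red i F).cf T := by
  constructor
  · intro a ha
    exact (hT ha).1.1
  · intro a ha b hb hab
    rcases red_att_sub i F _ hab with h | h
    · exact (hT hb).2 ⟨a, (hT ha).1, h⟩
    · exact (hT ha).2 ⟨b, (hT hb).1, h⟩

lemma stb_sub_Ek {i : ℕ} (hi : i = 2 ∨ i = 3 ∨ i = 4) (F : PCAF) (C : Set ℕ)
    {S : Set ℕ} (hstb : (Red i F).stb S) (hclaim : F.claim '' S = C) :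
    ∀ k, S ⊆ Ek F i C (k + 1) := by
  have hargs : S ⊆ ↑F.args := hstb.1.1
  have hE1 : S ⊆ E1 F C := by
    intro a ha
    refine ⟨⟨hargs ha, hclaim ▸ ⟨a, ha, rfl⟩⟩, ?_⟩
    rintro ⟨x, hx, hxa⟩
    have : F.claim x ∈ F.claim '' S := hclaim ▸ hx.2
    obtain ⟨x', hx'S, hx'c⟩ := this
    have : (x', a) ∈ F.att :=
      (F.isWf x hx.1 x' (hargs hx'S) hx'c.symm a).mp hxa
    exact cf_no_att hi F hstb.1 hx'S ha this
  intro k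
  induction k with
  | zero => exact hE1
  | succ n ih =>
    intro a ha
    refine ⟨ih ha, ?_⟩
    intro b hb
    have hbS : b ∉ S := fun hbS => hstb.1.2 b hbS a ha hb
    have hbargs : b ∈ F.args := ((Red i F).att_dom _ hb).1
    obtain ⟨x, hxS, hxb⟩ := hstb.2 b hbargs hbS
    exact ⟨x, ih hxS, hxb⟩

lemma stb_eq_Estar {i : ℕ} (hi : i = 2 ∨ i = 3 ∨ i = 4) (F : PCAF) (C : Set ℕ)
    {S : Set ℕ} (hstb : (Red i F).stb S) (hclaim : F.claim '' S = C) :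
    Estar F i C = S := by
  have hsub : S ⊆ Estar F i C := stb_sub_Ek hi F C hstb hclaim (F.args.card + 1)
  have hE1 : Estar F i C ⊆ E1 F C := Ek_sub_E1 F i C (F.args.card + 1)
  have hcf : (Red i F).cf (Estar F i C) := E1_cf hi F hE1
  refine Set.Subset.antisymm ?_ hsub
  intro a ha
  by_contra haS
  have haargs : a ∈ F.args := (hE1 ha).1.1
  obtain ⟨x, hxS, hxa⟩ := hstb.2 a haargs haS
  exact hcf.2 x (hsub hxS) a ha hxa

end Helpers

/-- For `i ∈ {2,3,4}`: `C ∈ stb_p^i(F)` iff `claim(E_*^i(C)) = C` and `E_*^i(C)`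
is a stable extension of `Red_i(F)`.  In particular, if `claim(E_*^i(C)) = C` but
`E_*^i(C)` is not stable in `Red_i(F)`, then no stable extension `S` of
`Red_i(F)` satisfies `claim(S) = C`. -/
theorem stmt_16 (F : PCAF) (C : Set ℕ) :
    ∀ i ∈ ({2, 3, 4} : Set ℕ),
      (C ∈ prefSem CAF.stb i F ↔
        (F.claim '' Estar F i C = C ∧ (Red i F).stb (Estar F i C))) ∧
      ((F.claim '' Estar F i C = C ∧ ¬ (Red i F).stb (Estar F i C)) →
        ∀ S : Set ℕ, (Red i F).stb S → F.claim '' S ≠ C) := by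
  intro i hi
  have hi' : i = 2 ∨ i = 3 ∨ i = 4 := by
    simpa [Set.mem_insert_iff] using hi
  constructor
  · constructor
    · rintro ⟨S, hstb, hclaim⟩
      have he := stb_eq_Estar hi' F C hstb hclaim
      rw [he]
      exact ⟨hclaim, hstb⟩
    · rintro ⟨hclaim, hstb⟩
      exact ⟨Estar F i C, hstb, hclaim⟩
  · rintro ⟨hclaim, hnstb⟩ S hstb hc
    exact hnstb (stb_eq_Estar hi' F C hstb hc ▸ hstb)
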